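/- (Quantum Bézout identity, one-colored version) For all natural numbers m, n, there exist polynomials a, b ∈ ℤ[x] such that a·[m] + b·[n] = [gcd(m,n)], where [k] denotes the k-th quantum number. -/
import Mathlib


open Polynomial

noncomputable def qnum : ℕ → Polynomial ℤ
  | 0 => 0
  | 1 => 1
  | (n + 2) => X * qnum (n + 1) - qnum n

lemma qnum_add (a b : ℕ) :
    qnum (a + b + 1) = qnum (a + 1) * qnum (b + 1) - qnum a * qnum b := by
  induction a using Nat.strong_induction_on with
  | _ a ih =>
    match a with
    | 0 => simp [qnum]
    | 1 =>
      rw [show 1 + b + 1 = b + 2 by omega, qnum]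
      simp [qnum]
    | (a + 2) =>
      have h1 := ih (a + 1) (by omega)
      have h0 := ih a (by omega)
      rw [show a + 2 + b + 1 = a + b + 3 by omega]
      have e1 : a + b + 3 = (a + b + 1) + 2 := by ring
      have h2 : qnum (a + 2 + 1) = X * qnum (a + 2) - qnum (a + 1) := rfl
      rw [e1, qnum, show (a+b+1)+1 = (a+1)+b+1 by ring, h1, h0, h2,
        show a + 1 + 1 = a + 2 from rfl, qnum]
      ring

lemma qnum_step (m n : ℕ) (hm : 0 < m) (hmn : m < n)
    (IH1 : ∃ a b : Polynomial ℤ, a * qnum m + b * qnum (n - m) = qnum (Nat.gcd m (n - m)))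
    (IH2 : ∃ c d : Polynomial ℤ, c * qnum (m - 1) + d * qnum m = qnum (Nat.gcd (m - 1) m)) :
    ∃ a b : Polynomial ℤ, a * qnum m + b * qnum n = qnum (Nat.gcd m n) := by
  obtain ⟨a, b, hab⟩ := IH1
  obtain ⟨c, d, hcd⟩ := IH2
  set k := n - m with hk
  have hgcd1 : Nat.gcd m k = Nat.gcd m n := Nat.gcd_sub_self_right (le_of_lt hmn)
  have hgcd2 : Nat.gcd (m - 1) m = 1 := by
    obtain ⟨t, rfl⟩ : ∃ t, m = t + 1 := ⟨m - 1, by omega⟩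
    simp [Nat.succ_sub_one, Nat.gcd_comm, Nat.gcd_self_add_left]
  rw [hgcd2] at hcd
  have hq : qnum (k + (m - 1) + 1) = qnum (k + 1) * qnum (m - 1 + 1) - qnum k * qnum (m - 1) :=
    qnum_add k (m - 1)
  have e1 : k + (m - 1) + 1 = n := by omega
  have e2 : m - 1 + 1 = m := by omega
  rw [e1, e2] at hq
  refine ⟨a + b * c * qnum (k + 1) + b * d * qnum k, -(b * c), ?_⟩
  rw [hgcd1] at hab
  have hone : qnum 1 = 1 := rfl
  rw [hone] at hcd
  linear_combination hab + (b * qnum k) * hcd + (-(b * c)) * hq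

lemma quantum_bezout_aux : ∀ s m n : ℕ, m + n ≤ s →
    ∃ a b : Polynomial ℤ, a * qnum m + b * qnum n = qnum (Nat.gcd m n) := by
  intro s
  induction s with
  | zero =>
    intro m n h
    have hm : m = 0 := by omega
    have hn : n = 0 := by omega
    subst hm; subst hn
    exact ⟨0, 0, by simp [qnum]⟩
  | succ s ih =>
    intro m n h
    rcases Nat.eq_zero_or_pos m with hm | hm
    · subst hm
      exact ⟨0, 1, by simp [qnum, Nat.gcd]⟩
    rcases Nat.eq_zero_or_pos n with hn | hn
    · subst hn
      exact ⟨1, 0, by simp [qnum]⟩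
    rcases Nat.lt_trichotomy m n with hlt | heq | hgt
    · exact qnum_step m n hm hlt (ih m (n - m) (by omega)) (ih (m - 1) m (by omega))
    · subst heq
      exact ⟨1, 0, by simp [Nat.gcd_self]⟩
    · obtain ⟨a, b, hab⟩ := qnum_step n m hn hgt (ih n (m - n) (by omega))
        (ih (n - 1) n (by omega))
      exact ⟨b, a, by rw [Nat.gcd_comm]; linear_combination hab⟩

theorem quantum_bezout (m n : ℕ) :
    ∃ a b : Polynomial ℤ, a * qnum m + b * qnum n = qnum (Nat.gcd m n) := by
  exact quantum_bezout_aux (m + n) m n le_rfl
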